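/- The map from equivalence classes of generic m×n matrices (m ≥ n+2, n ≥ 2) to conjugacy classes of subgroups of SL_{m+n+1}(ℝ) given by [T] ↦ [L_T] is well defined and injective: L_T is conjugate to L_S if and only if UC of the projectivized rows of T equals UC of the projectivized rows of S. -/

import Mathlib

open Matrix Set
open scoped LinearAlgebra.Projectivization

/-- An `m × ν` real matrix is generic if every `ν` of its rows are linearly
independent. -/
def Generic {m ν : ℕ} (T : Matrix (Fin m) (Fin ν) ℝ) : Prop :=
  ∀ s : Finset (Fin m), s.card = ν → LinearIndependent ℝ (fun i : s => T i)

lemma Generic.row_ne_zero {m ν : ℕ} (hn : 1 ≤ ν) (hnm : ν ≤ m)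
    {T : Matrix (Fin m) (Fin ν) ℝ} (hT : Generic T) (j : Fin m) : T j ≠ 0 := by
  obtain ⟨t, hjt, hcard⟩ := Finset.exists_superset_card_eq
    (s := ({j} : Finset (Fin m))) (by simpa using hn) (by simpa using hnm)
  exact (hT t hcard).ne_zero ⟨j, hjt (Finset.mem_singleton_self j)⟩

/-- The projectivized rows of a generic matrix, an augmented basis in `RP^n`. -/
noncomputable def projRows {m n : ℕ} (hnm : n + 1 ≤ m)
    (T : Matrix (Fin m) (Fin (n + 1)) ℝ) (hT : Generic T) :
    Fin m → ℙ ℝ (Fin (n + 1) → ℝ) := fun j =>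
  Projectivization.mk ℝ (T j) (hT.row_ne_zero (Nat.succ_le_succ (Nat.zero_le n)) hnm j)

/-- The standard projective basis of `RP^n`. -/
noncomputable def stdProjBasis (n : ℕ) : Fin (n + 2) → ℙ ℝ (Fin (n + 1) → ℝ) := fun i =>
  if h : (i : ℕ) < n + 1 then
    Projectivization.mk ℝ (Pi.single (⟨i, h⟩ : Fin (n + 1)) (1 : ℝ))
      (by
        intro hzero
        have := congrFun hzero ⟨i, h⟩
        simp at this)
  else
    Projectivization.mk ℝ (fun _ => (1 : ℝ))
      (by
        intro hzero
        have := congrFun hzero ⟨0, Nat.succ_pos n⟩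
        simp at this)

/-- The projective transformation induced by a linear automorphism. -/
noncomputable def projMap {n : ℕ} (e : (Fin (n + 1) → ℝ) ≃ₗ[ℝ] (Fin (n + 1) → ℝ)) :
    ℙ ℝ (Fin (n + 1) → ℝ) → ℙ ℝ (Fin (n + 1) → ℝ) :=
  Projectivization.map (e : (Fin (n + 1) → ℝ) →ₗ[ℝ] (Fin (n + 1) → ℝ)) e.injective

/-- The unordered generalized cross ratio of a family of `m` points of `RP^n`. -/
noncomputable def UC {n m : ℕ} (y : Fin m → ℙ ℝ (Fin (n + 1) → ℝ)) :
    Set (Fin m → ℙ ℝ (Fin (n + 1) → ℝ)) :=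
  {z | ∃ σ : Equiv.Perm (Fin m), ∃ e : (Fin (n + 1) → ℝ) ≃ₗ[ℝ] (Fin (n + 1) → ℝ),
    (∀ i, z i = projMap e (y (σ i))) ∧
    ∀ i : Fin (n + 2), ∀ h : (i : ℕ) < m, z ⟨i, h⟩ = stdProjBasis n i}

/-- The upper-right block of an element of `L_T`. -/
def rhoBlock {m ν : ℕ} (T : Matrix (Fin m) (Fin ν) ℝ) (a : Fin m → ℝ) (b : Fin ν → ℝ) :
    Matrix (Fin (m + 1)) (Fin ν) ℝ :=
  fun i j => if h : (i : ℕ) < m then a ⟨i, h⟩ * T ⟨i, h⟩ j else b j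

/-- The homomorphism `ρ_T : ℝ^(m+ν) → SL_{m+ν+1}(ℝ)`. -/
def rhoT {m ν : ℕ} (T : Matrix (Fin m) (Fin ν) ℝ) (a : Fin m → ℝ) (b : Fin ν → ℝ) :
    Matrix.SpecialLinearGroup (Fin (m + 1) ⊕ Fin ν) ℝ :=
  ⟨Matrix.fromBlocks 1 (rhoBlock T a b) 0 1, by simp [Matrix.det_fromBlocks_zero₂₁]⟩

/-- The group `L_T ≤ SL_{m+ν+1}(ℝ)`, the image of `ρ_T`. -/
def LTgrp {m ν : ℕ} (T : Matrix (Fin m) (Fin ν) ℝ) :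
    Set (Matrix.SpecialLinearGroup (Fin (m + 1) ⊕ Fin ν) ℝ) :=
  {g | ∃ a b, g = rhoT T a b}

lemma projMap_mk {n : ℕ} (e : (Fin (n + 1) → ℝ) ≃ₗ[ℝ] (Fin (n + 1) → ℝ))
    (v : Fin (n + 1) → ℝ) (hv : v ≠ 0) :
    projMap e (Projectivization.mk ℝ v hv) =
      Projectivization.mk ℝ (e v) (by simp [hv]) := by
  simp [projMap, Projectivization.map_mk]

lemma projMap_trans {n : ℕ} (e f : (Fin (n + 1) → ℝ) ≃ₗ[ℝ] (Fin (n + 1) → ℝ))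
    (x : ℙ ℝ (Fin (n + 1) → ℝ)) :
    projMap (e ≪≫ₗ f) x = projMap f (projMap e x) := by
  induction x using Projectivization.ind with
  | h v hv => simp [projMap_mk]

lemma projMap_symm_apply {n : ℕ} (e : (Fin (n + 1) → ℝ) ≃ₗ[ℝ] (Fin (n + 1) → ℝ))
    (x : ℙ ℝ (Fin (n + 1) → ℝ)) : projMap e.symm (projMap e x) = x := by
  induction x using Projectivization.ind with
  | h v hv => simp [projMap_mk]

def ProjRel {n m : ℕ} (y y' : Fin m → ℙ ℝ (Fin (n + 1) → ℝ)) : Prop :=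
  ∃ τ : Equiv.Perm (Fin m), ∃ e : (Fin (n + 1) → ℝ) ≃ₗ[ℝ] (Fin (n + 1) → ℝ),
    ∀ i, y i = projMap e (y' (τ i))

lemma ProjRel.symm {n m : ℕ} {y y' : Fin m → ℙ ℝ (Fin (n + 1) → ℝ)}
    (h : ProjRel y y') : ProjRel y' y := by
  obtain ⟨τ, e, h⟩ := h
  refine ⟨τ.symm, e.symm, fun j => ?_⟩
  have := h (τ.symm j)
  rw [Equiv.apply_symm_apply] at this
  rw [this, projMap_symm_apply]

lemma UC_subset_of_rel {n m : ℕ} {y y' : Fin m → ℙ ℝ (Fin (n + 1) → ℝ)}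
    (h : ProjRel y y') : UC y ⊆ UC y' := by
  obtain ⟨τ, e, h⟩ := h
  rintro z ⟨σ₁, e₁, hz, hnorm⟩
  refine ⟨σ₁.trans τ, e ≪≫ₗ e₁, fun i => ?_, hnorm⟩
  rw [hz i, h (σ₁ i), ← projMap_trans]
  rfl

lemma UC_eq_of_rel {n m : ℕ} {y y' : Fin m → ℙ ℝ (Fin (n + 1) → ℝ)}
    (h : ProjRel y y') : UC y = UC y' :=
  Set.Subset.antisymm (UC_subset_of_rel h) (UC_subset_of_rel h.symm)

lemma Generic.linIndep_comp {m ν : ℕ} {T : Matrix (Fin m) (Fin ν) ℝ} (hT : Generic T)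
    (f : Fin ν → Fin m) (hf : Function.Injective f) :
    LinearIndependent ℝ (fun j => T (f j)) := by
  set s : Finset (Fin m) := Finset.univ.map ⟨f, hf⟩ with hs
  have hcard : s.card = ν := by simp [hs]
  have hmem : ∀ j, f j ∈ s := fun j => by simp [hs]
  have := (hT s hcard).comp (fun j : Fin ν => (⟨f j, hmem j⟩ : s))
    (fun j k h => hf (by simpa [Subtype.ext_iff] using h))
  exact this

lemma Generic.ne_smul {m ν : ℕ} (h2 : 2 ≤ ν) (hνm : ν ≤ m) {T : Matrix (Fin m) (Fin ν) ℝ}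
    (hT : Generic T) {i j : Fin m} (hij : i ≠ j) (c : ℝ) : T i ≠ c • T j := by
  intro hEq
  obtain ⟨t, hsub, hcard⟩ := Finset.exists_superset_card_eq
    (s := ({i, j} : Finset (Fin m))) (le_trans (Finset.card_pair hij).le h2) (by simpa using hνm)
  have hi : i ∈ t := hsub (by simp)
  have hj : j ∈ t := hsub (by simp)
  have hind := (hT t hcard).comp
    (fun k : Fin 2 => if k = 0 then (⟨i, hi⟩ : t) else ⟨j, hj⟩)
    (by
      intro k l h
      fin_cases k <;> fin_cases l <;> simp_all [Subtype.ext_iff] <;> exact absurd h hij)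
  have hpair : LinearIndependent ℝ ![T i, T j] := by
    convert hind using 1
    funext k
    fin_cases k <;> simp
  have := (LinearIndependent.pair_iff.1 hpair 1 (-c) (by rw [hEq]; module)).1
  exact one_ne_zero this

lemma exists_norm_basis {n m : ℕ} (hm : n + 3 ≤ m) (hnm : n + 1 ≤ m)
    (T : Matrix (Fin m) (Fin (n+1)) ℝ) (hT : Generic T) :
    ∃ e₁ : (Fin (n + 1) → ℝ) ≃ₗ[ℝ] (Fin (n + 1) → ℝ),
      (∀ j : Fin (n+1), ∃ c : ℝˣ,
          e₁ (T (Fin.castLE hnm j)) = (c : ℝ) • (Pi.single j (1:ℝ) : Fin (n+1) → ℝ)) ∧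
      e₁ (T ⟨n+1, by omega⟩) = fun _ => (1:ℝ) := by
  set ι : Fin (n+1) → Fin m := Fin.castLE hnm with hιdef
  have hι : Function.Injective ι := Fin.castLE_injective hnm
  have hind : LinearIndependent ℝ (fun j => T (ι j)) := hT.linIndep_comp ι hι
  have hcardeq : Fintype.card (Fin (n+1)) = Module.finrank ℝ (Fin (n+1) → ℝ) := by
    simp [Module.finrank_fin_fun]
  set B₀ := basisOfLinearIndependentOfCardEqFinrank hind hcardeq with hB₀
  have hB₀coe : ∀ j, B₀ j = T (ι j) := fun j => by
    rw [hB₀, coe_basisOfLinearIndependentOfCardEqFinrank]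
  set r : Fin m := ⟨n+1, by omega⟩ with hrdef
  set d : Fin (n+1) → ℝ := fun j => B₀.repr (T r) j with hddef
  have hrepr : ∑ j, d j • T (ι j) = T r := by
    have := B₀.sum_repr (T r)
    simpa only [hddef, hB₀coe] using this
  have hd : ∀ j, d j ≠ 0 := by
    intro j₀ h0
    set ι' : Fin (n+1) → Fin m := fun j => if j = j₀ then r else ι j with hι'def
    have hιr : ∀ j, ι j ≠ r := by
      intro j h
      have : ((ι j : Fin m) : ℕ) = n + 1 := by rw [h]
      simp only [hιdef, Fin.coe_castLE] at this
      omega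
    have hι' : Function.Injective ι' := by
      intro a b h
      simp only [hι'def] at h
      by_cases ha : a = j₀ <;> by_cases hb : b = j₀ <;> simp [ha, hb] at h ⊢
      · exact absurd h.symm (hιr b)
      · exact absurd h (hιr a)
      · exact hι h
    have hind' := hT.linIndep_comp ι' hι'
    rw [Fintype.linearIndependent_iff] at hind'
    have hA : ∑ j ∈ Finset.univ.erase j₀, d j • T (ι j) = T r := by
      have h2 := Finset.sum_erase_add Finset.univ (fun j => d j • T (ι j))
        (Finset.mem_univ j₀)
      simp only [h0, zero_smul, add_zero] at h2
      rw [h2, hrepr]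
    have hsum : ∑ j, (if j = j₀ then (-1:ℝ) else d j) • T (ι' j) = 0 := by
      rw [← Finset.sum_erase_add Finset.univ _ (Finset.mem_univ j₀)]
      have herase : ∑ j ∈ Finset.univ.erase j₀,
          (if j = j₀ then (-1:ℝ) else d j) • T (ι' j)
          = ∑ j ∈ Finset.univ.erase j₀, d j • T (ι j) := by
        refine Finset.sum_congr rfl fun j hj => ?_
        have hjne : j ≠ j₀ := Finset.ne_of_mem_erase hj
        simp [hι'def, hjne]
      rw [herase, hA]
      simp [hι'def]
    have := hind' _ hsum j₀
    simp at this
  -- now build the basis of scaled rows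
  have hindB : LinearIndependent ℝ (fun j => d j • T (ι j)) := by
    have := hind.units_smul (fun j => Units.mk0 (d j) (hd j))
    convert this using 1
    funext j; simp [Units.smul_def]
  set B := basisOfLinearIndependentOfCardEqFinrank hindB hcardeq with hB
  have hBcoe : ∀ j, B j = d j • T (ι j) := fun j => by
    rw [hB, coe_basisOfLinearIndependentOfCardEqFinrank]
  refine ⟨B.equivFun, fun j => ?_, ?_⟩
  · refine ⟨Units.mk0 (d j)⁻¹ (inv_ne_zero (hd j)), ?_⟩
    have h1 : T (Fin.castLE hnm j) = (d j)⁻¹ • B j := by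
      rw [hBcoe, smul_smul, inv_mul_cancel₀ (hd j), one_smul]
    rw [h1, _root_.map_smul]
    have h2 : B.equivFun (B j) = Pi.single j (1:ℝ) := by
      funext k
      rw [B.equivFun_self]
      rw [Pi.single_apply]
      by_cases h : j = k
      · simp [h]
      · simp [h, Ne.symm h]
    rw [h2]
    rfl
  · have h3 : T (⟨n+1, by omega⟩ : Fin m) = ∑ j, B j := by
      rw [← hrepr]
      exact Finset.sum_congr rfl fun j _ => (hBcoe j).symm
    rw [h3, map_sum]
    funext k
    have : ∀ j, B.equivFun (B j) k = if j = k then (1:ℝ) else 0 := fun j =>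
      B.equivFun_self j k
    simp only [Finset.sum_apply, this]
    simp

lemma UC_self_mem {n m : ℕ} (hm : n + 3 ≤ m) (hnm : n + 1 ≤ m)
    (T : Matrix (Fin m) (Fin (n+1)) ℝ) (hT : Generic T) :
    ∃ e₁ : (Fin (n + 1) → ℝ) ≃ₗ[ℝ] (Fin (n + 1) → ℝ),
      (fun i => projMap e₁ (projRows hnm T hT i)) ∈ UC (projRows hnm T hT) := by
  obtain ⟨e₁, h1, h2⟩ := exists_norm_basis hm hnm T hT
  refine ⟨e₁, 1, e₁, fun i => rfl, ?_⟩
  intro i hi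
  by_cases hlt : (i : ℕ) < n + 1
  · obtain ⟨c, hc⟩ := h1 ⟨i, hlt⟩
    have hidx : (⟨(i : ℕ), hi⟩ : Fin m) = Fin.castLE hnm ⟨i, hlt⟩ := rfl
    rw [hidx]
    simp only [projRows, projMap_mk]
    rw [stdProjBasis]
    rw [dif_pos hlt]
    rw [Projectivization.mk_eq_mk_iff]
    exact ⟨c, by rw [Units.smul_def, ← hc]⟩
  · have hidx : (⟨(i : ℕ), hi⟩ : Fin m) = (⟨n+1, by omega⟩ : Fin m) := by
      have : (i : ℕ) = n + 1 := by omega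
      exact Fin.ext this
    rw [hidx]
    simp only [projRows, projMap_mk]
    rw [stdProjBasis]
    rw [dif_neg hlt]
    rw [Projectivization.mk_eq_mk_iff]
    exact ⟨1, by simp [h2]⟩

lemma rhoBlock_castSucc {m ν : ℕ} (T : Matrix (Fin m) (Fin ν) ℝ) (a b) (i : Fin m)
    (j : Fin ν) : rhoBlock T a b (Fin.castSucc i) j = a i * T i j := by
  have h : ((Fin.castSucc i : Fin (m+1)) : ℕ) < m := by simp
  rw [rhoBlock]
  rw [dif_pos h]
  have : (⟨(Fin.castSucc i : ℕ), h⟩ : Fin m) = i := Fin.ext (by simp)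
  rw [this]

lemma rhoBlock_last {m ν : ℕ} (T : Matrix (Fin m) (Fin ν) ℝ) (a b) (j : Fin ν) :
    rhoBlock T a b (Fin.last m) j = b j := by
  rw [rhoBlock, dif_neg (by simp)]

lemma rhoBlock_row_castSucc {m ν : ℕ} (T : Matrix (Fin m) (Fin ν) ℝ) (a b) (i : Fin m) :
    rhoBlock T a b (Fin.castSucc i) = a i • T i := by
  funext j; rw [rhoBlock_castSucc]; rfl

lemma mul_rhoBlock_apply {m ν κ : ℕ} (M : Matrix (Fin κ) (Fin (m + 1)) ℝ)
    (T : Matrix (Fin m) (Fin ν) ℝ) (a b) (k : Fin κ) (j : Fin ν) :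
    (M * rhoBlock T a b) k j =
      (∑ i : Fin m, M k (Fin.castSucc i) * (a i * T i j)) + M k (Fin.last m) * b j := by
  rw [Matrix.mul_apply, Fin.sum_univ_castSucc]
  congr 1
  · exact Finset.sum_congr rfl fun i _ => by rw [rhoBlock_castSucc]
  · rw [rhoBlock_last]

lemma rhoBlock_mul_castSucc {m ν : ℕ} (S : Matrix (Fin m) (Fin ν) ℝ) (a' b')
    (Z : Matrix (Fin ν) (Fin ν) ℝ) (k : Fin m) :
    (rhoBlock S a' b' * Z) (Fin.castSucc k) = a' k • (S k ᵥ* Z) := by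
  rw [Matrix.mul_apply_eq_vecMul, rhoBlock_row_castSucc, Matrix.smul_vecMul]

lemma rhoT_coe {m ν : ℕ} (T : Matrix (Fin m) (Fin ν) ℝ) (a b) :
    (rhoT T a b : Matrix (Fin (m + 1) ⊕ Fin ν) (Fin (m + 1) ⊕ Fin ν) ℝ) =
      fromBlocks 1 (rhoBlock T a b) 0 1 := rfl

lemma projRel_of_conj {n m : ℕ} (hm : n + 3 ≤ m) (hn : 1 ≤ n) (hnm : n + 1 ≤ m)
    (T S : Matrix (Fin m) (Fin (n + 1)) ℝ) (hT : Generic T) (hS : Generic S)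
    (R : Matrix.SpecialLinearGroup (Fin (m + 1) ⊕ Fin (n + 1)) ℝ)
    (hR : (fun g => R * g * R⁻¹) '' LTgrp T = LTgrp S) :
    ProjRel (projRows hnm T hT) (projRows hnm S hS) := by
  classical
  -- step 1: equations
  have key2 : ∀ a b, ∃ a' b',
      (R : Matrix (Fin (m + 1) ⊕ Fin (n + 1)) (Fin (m + 1) ⊕ Fin (n + 1)) ℝ) *
        (rhoT T a b : Matrix _ _ ℝ) = (rhoT S a' b' : Matrix _ _ ℝ) * (R : Matrix _ _ ℝ) := by
    intro a b
    have hmem : (R * rhoT T a b * R⁻¹) ∈ (fun g => R * g * R⁻¹) '' LTgrp T :=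
      ⟨rhoT T a b, ⟨a, b, rfl⟩, rfl⟩
    rw [hR] at hmem
    obtain ⟨a', b', h⟩ := hmem
    refine ⟨a', b', ?_⟩
    have h2 : R * rhoT T a b = rhoT S a' b' * R := by
      rw [← h]; group
    have h3 := Subtype.ext_iff.mp h2
    simpa using h3
  set Rm : Matrix (Fin (m + 1) ⊕ Fin (n + 1)) (Fin (m + 1) ⊕ Fin (n + 1)) ℝ :=
    (R : Matrix (Fin (m + 1) ⊕ Fin (n + 1)) (Fin (m + 1) ⊕ Fin (n + 1)) ℝ) with hRmdef
  set P := Rm.toBlocks₁₁ with hP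
  set X := Rm.toBlocks₁₂ with hX
  set Y := Rm.toBlocks₂₁ with hYd
  set Z := Rm.toBlocks₂₂ with hZ
  have hRm : Rm = fromBlocks P X Y Z := (fromBlocks_toBlocks Rm).symm
  have key3 : ∀ a b, ∃ a' b', Y * rhoBlock T a b = 0 ∧
      P * rhoBlock T a b = rhoBlock S a' b' * Z := by
    intro a b
    obtain ⟨a', b', h⟩ := key2 a b
    rw [rhoT_coe, rhoT_coe, hRm, fromBlocks_multiply, fromBlocks_multiply] at h
    have h12 := congrArg Matrix.toBlocks₁₂ h
    have h22 := congrArg Matrix.toBlocks₂₂ h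
    simp only [Matrix.toBlocks_fromBlocks₁₂, Matrix.toBlocks_fromBlocks₂₂,
      Matrix.mul_one, Matrix.one_mul, Matrix.mul_zero, Matrix.zero_mul,
      add_zero, zero_add] at h12 h22
    refine ⟨a', b', ?_, ?_⟩
    · rwa [add_eq_right] at h22
    · rwa [add_comm (P * rhoBlock T a b) X, add_right_inj] at h12
  have hY : Y = 0 := by
    ext k l
    simp only [Matrix.zero_apply]
    induction l using Fin.lastCases with
    | last =>
      obtain ⟨a', b', h0, _⟩ := key3 0 (fun _ => (1 : ℝ))
      have := congrFun (congrFun h0 k) ⟨0, by omega⟩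
      rw [mul_rhoBlock_apply] at this
      simpa using this
    | cast i =>
      obtain ⟨jx, hjx⟩ := Function.ne_iff.mp (hT.row_ne_zero (by omega) (by omega) i)
      obtain ⟨a', b', h0, _⟩ := key3 (Pi.single i 1) 0
      have := congrFun (congrFun h0 k) jx
      rw [mul_rhoBlock_apply] at this
      rw [Finset.sum_eq_single i (fun i' _ hne => by
          simp [Pi.single_eq_of_ne hne]) (by simp)] at this
      simp only [Pi.single_eq_same, one_mul, Pi.zero_apply, mul_zero, add_zero,
        Matrix.zero_apply] at this
      exact (mul_eq_zero.mp this).resolve_right hjx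
  rw [hY] at hRm
  have hdet : P.det * Z.det = 1 := by
    have hdet1 := R.prop
    rw [← hRmdef, hRm, Matrix.det_fromBlocks_zero₂₁] at hdet1
    exact hdet1
  have hZunit : IsUnit Z.det := IsUnit.of_mul_eq_one _ (by rw [mul_comm] at hdet; exact hdet)
  have hPdet : P.det ≠ 0 := fun h => by rw [h, zero_mul] at hdet; exact zero_ne_one hdet
  set w : Fin m → (Fin (n + 1) → ℝ) := fun k => S k ᵥ* Z with hw
  -- claim 1 : last column of P vanishes above the last row
  have claim1 : ∀ k : Fin m, P (Fin.castSucc k) (Fin.last m) = 0 := by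
    intro k
    by_contra hne
    have hbj : ∀ j0 : Fin (n + 1), ∃ α : ℝ,
        ∀ j, P (Fin.castSucc k) (Fin.last m) * ((Pi.single j0 (1:ℝ) : Fin (n+1) → ℝ) j)
          = α * w k j := by
      intro j0
      obtain ⟨a', b', _, h⟩ := key3 0 (Pi.single j0 (1:ℝ))
      refine ⟨a' k, fun j => ?_⟩
      have h1 := congrFun (congrFun h (Fin.castSucc k)) j
      rw [mul_rhoBlock_apply] at h1
      simp only [Pi.zero_apply, zero_mul, mul_zero, Finset.sum_const_zero, zero_add] at h1
      rw [h1, rhoBlock_mul_castSucc]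
      rfl
    obtain ⟨α₀, h0⟩ := hbj ⟨0, by omega⟩
    obtain ⟨α₁, h1⟩ := hbj ⟨1, by omega⟩
    have hne01 : (⟨1, by omega⟩ : Fin (n + 1)) ≠ ⟨0, by omega⟩ := by
      simp [Fin.ext_iff]
    have e00 := h0 ⟨0, by omega⟩
    rw [Pi.single_eq_same, mul_one] at e00
    have e10 := h1 ⟨0, by omega⟩
    rw [Pi.single_eq_of_ne (Ne.symm hne01), mul_zero] at e10
    have e11 := h1 ⟨1, by omega⟩
    rw [Pi.single_eq_same, mul_one] at e11
    have hwk0 : w k ⟨0, by omega⟩ ≠ 0 := by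
      intro hz
      rw [hz, mul_zero] at e00
      exact hne e00
    have hα₁ : α₁ = 0 := by
      rcases mul_eq_zero.mp e10.symm with h | h
      · exact h
      · exact absurd h hwk0
    rw [hα₁, zero_mul] at e11
    exact hne e11
  -- claim 2 : each column of P has a nonzero entry above the last row
  have claim2 : ∀ i : Fin m, ∃ k : Fin m, P (Fin.castSucc k) (Fin.castSucc i) ≠ 0 := by
    intro i
    by_contra hall
    push_neg at hall
    apply hPdet
    rw [← Matrix.exists_mulVec_eq_zero_iff]
    by_cases hs2 : P (Fin.last m) (Fin.last m) = 0
    · refine ⟨Pi.single (Fin.last m) 1, by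
        intro hz
        have := congrFun hz (Fin.last m)
        simp at this, ?_⟩
      rw [Matrix.mulVec_single]
      funext k'
      induction k' using Fin.lastCases with
      | last => simp [hs2]
      | cast k => simp [claim1 k]
    · set s1 := P (Fin.last m) (Fin.castSucc i) with hs1
      refine ⟨Pi.single (Fin.castSucc i) (P (Fin.last m) (Fin.last m))
          - Pi.single (Fin.last m) s1, ?_, ?_⟩
      · intro hz
        have := congrFun hz (Fin.castSucc i)
        rw [Pi.sub_apply, Pi.single_eq_same,
          Pi.single_eq_of_ne (Fin.castSucc_lt_last i).ne, sub_zero] at this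
        exact hs2 this
      · rw [Matrix.mulVec_sub, Matrix.mulVec_single, Matrix.mulVec_single]
        funext k'
        induction k' using Fin.lastCases with
        | last => simp [mul_comm, hs1]
        | cast k => simp [claim1 k, hall k]
  -- claim 3
  have claim3 : ∀ i : Fin m, ∃ (k : Fin m) (u : ℝ), u ≠ 0 ∧ T i = u • w k := by
    intro i
    obtain ⟨k, hk⟩ := claim2 i
    obtain ⟨a', b', _, h⟩ := key3 (Pi.single i 1) 0
    have hrow : ∀ j, P (Fin.castSucc k) (Fin.castSucc i) * T i j = a' k * w k j := by
      intro j
      have h1 := congrFun (congrFun h (Fin.castSucc k)) j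
      rw [mul_rhoBlock_apply] at h1
      rw [Finset.sum_eq_single i (fun i' _ hne => by
          simp [Pi.single_eq_of_ne hne]) (by simp)] at h1
      simp only [Pi.single_eq_same, one_mul, Pi.zero_apply, mul_zero, add_zero] at h1
      rw [h1, rhoBlock_mul_castSucc]
      rfl
    have ha' : a' k ≠ 0 := by
      intro hz
      apply hT.row_ne_zero (by omega : 1 ≤ n + 1) (by omega) i
      funext j
      have := hrow j
      rw [hz, zero_mul] at this
      exact (mul_eq_zero.mp this).resolve_left hk
    refine ⟨k, a' k * (P (Fin.castSucc k) (Fin.castSucc i))⁻¹,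
      mul_ne_zero ha' (inv_ne_zero hk), ?_⟩
    funext j
    have hthis := hrow j
    rw [Pi.smul_apply, smul_eq_mul]
    field_simp
    linear_combination hthis
  choose τ u hu hTw using claim3
  have hτinj : Function.Injective τ := by
    intro i i' hτ
    by_contra hne
    have h1 : T i = u i • w (τ i) := hTw i
    have h2 : T i' = u i' • w (τ i) := by rw [hτ]; exact hTw i'
    have : T i = (u i * (u i')⁻¹) • T i' := by
      rw [h2, smul_smul, mul_assoc, inv_mul_cancel₀ (hu i'), mul_one, h1]
    exact hT.ne_smul (by omega) (by omega) hne _ this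
  have hτbij := Finite.injective_iff_bijective.mp hτinj
  set τp : Equiv.Perm (Fin m) := Equiv.ofBijective τ hτbij with hτp
  -- the linear equivalence
  have hZ1 : Z⁻¹ * Z = 1 := Matrix.nonsing_inv_mul Z hZunit
  have hZ2 : Z * Z⁻¹ = 1 := Matrix.mul_nonsing_inv Z hZunit
  set E : (Fin (n + 1) → ℝ) ≃ₗ[ℝ] (Fin (n + 1) → ℝ) :=
    LinearEquiv.ofLinear (Matrix.vecMulLinear Z) (Matrix.vecMulLinear Z⁻¹)
      (by
        apply LinearMap.ext
        intro v
        simp [Matrix.vecMul_vecMul, hZ1])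
      (by
        apply LinearMap.ext
        intro v
        simp [Matrix.vecMul_vecMul, hZ2]) with hE
  refine ⟨τp, E, fun i => ?_⟩
  have hEv : E (S (τ i)) = w (τ i) := rfl
  simp only [projRows]
  rw [projMap_mk]
  rw [Projectivization.mk_eq_mk_iff]
  refine ⟨Units.mk0 (u i) (hu i), ?_⟩
  rw [Units.smul_def, Units.val_mk0]
  show u i • E (S (τ i)) = T i
  rw [hEv, ← hTw i]

lemma conj_of_projRel {n m : ℕ} (hm : n + 3 ≤ m) (hn : 1 ≤ n) (hnm : n + 1 ≤ m)
    (T S : Matrix (Fin m) (Fin (n + 1)) ℝ) (hT : Generic T) (hS : Generic S)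
    (rel : ProjRel (projRows hnm S hS) (projRows hnm T hT)) :
    ∃ R : Matrix.SpecialLinearGroup (Fin (m + 1) ⊕ Fin (n + 1)) ℝ,
      (fun g => R * g * R⁻¹) '' LTgrp T = LTgrp S := by
  classical
  obtain ⟨τ, e, hrel⟩ := rel
  have hc : ∀ i, ∃ cc : ℝˣ, (cc : ℝ) • e (T (τ i)) = S i := by
    intro i
    have h := hrel i
    simp only [projRows, projMap_mk] at h
    rw [Projectivization.mk_eq_mk_iff] at h
    obtain ⟨cc, hcc⟩ := h
    exact ⟨cc, by rw [← Units.smul_def, hcc]⟩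
  choose c hcv using hc
  -- the right block Q
  set Q : Matrix (Fin (n + 1)) (Fin (n + 1)) ℝ :=
    (LinearMap.toMatrix' (e.symm : (Fin (n + 1) → ℝ) →ₗ[ℝ] (Fin (n + 1) → ℝ)))ᵀ with hQ
  have hQkey : ∀ v : Fin (n + 1) → ℝ, (e v) ᵥ* Q = v := by
    intro v
    rw [hQ, Matrix.vecMul_transpose, ← Matrix.toLin'_apply, Matrix.toLin'_toMatrix']
    exact e.symm_apply_apply v
  have hQmul : Q * (LinearMap.toMatrix'
      (e : (Fin (n+1) → ℝ) →ₗ[ℝ] (Fin (n+1) → ℝ)))ᵀ = 1 := by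
    rw [hQ, ← Matrix.transpose_mul, ← LinearMap.toMatrix'_comp]
    have : ((e : (Fin (n+1) → ℝ) →ₗ[ℝ] (Fin (n+1) → ℝ)).comp
        (e.symm : (Fin (n+1) → ℝ) →ₗ[ℝ] (Fin (n+1) → ℝ))) = LinearMap.id := by
      ext v; simp
    rw [this, LinearMap.toMatrix'_id, Matrix.transpose_one]
  have hQdet : Q.det ≠ 0 := by
    intro h0
    have := congrArg Matrix.det hQmul
    rw [Matrix.det_mul, h0, zero_mul] at this
    simp at this
  -- the left block P
  set τhat : Fin (m + 1) → Fin (m + 1) := fun k =>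
    if h : (k : ℕ) < m then Fin.castSucc (τ ⟨k, h⟩) else Fin.last m with hτhat
  have hτhat_cast : ∀ i : Fin m, τhat (Fin.castSucc i) = Fin.castSucc (τ i) := by
    intro i
    have h : ((Fin.castSucc i : Fin (m+1)) : ℕ) < m := by simp
    rw [hτhat]
    simp only [h, dif_pos]
    congr 1
  have hτhat_last : τhat (Fin.last m) = Fin.last m := by
    rw [hτhat]; simp
  have hτhatinj : Function.Injective τhat := by
    intro k k' h
    rw [hτhat] at h
    by_cases h1 : (k : ℕ) < m <;> by_cases h2 : (k' : ℕ) < m <;> simp [h1, h2] at h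
    · exact Fin.ext h
    · exact absurd (congrArg Fin.val h) (by simp; omega)
    · rw [Fin.ext_iff]; omega
  set P : ℝ → Matrix (Fin (m + 1)) (Fin (m + 1)) ℝ := fun t k l =>
    if l = τhat k then (if (k : ℕ) < m then 1 else t) else 0 with hPdef
  have hPmul : ∀ (t : ℝ) (M : Matrix (Fin (m + 1)) (Fin (n + 1)) ℝ) k j,
      (P t * M) k j = (if (k : ℕ) < m then 1 else t) * M (τhat k) j := by
    intro t M k j
    rw [Matrix.mul_apply]
    simp only [hPdef, ite_mul, zero_mul]
    rw [Finset.sum_ite_eq' Finset.univ (τhat k)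
      (fun x => if (k : ℕ) < m then 1 * M x j else t * M x j)]
    by_cases hk : (k : ℕ) < m <;> simp [hk]
  have hPtr : (P 1) * (P 1)ᵀ = 1 := by
    ext k k'
    rw [Matrix.mul_apply]
    simp only [Matrix.transpose_apply]
    simp only [hPdef, Matrix.transpose_apply, ite_self, ite_mul, zero_mul, one_mul]
    rw [Finset.sum_ite_eq' Finset.univ (τhat k)
      (fun x => if x = τhat k' then (1:ℝ) else 0)]
    simp only [Finset.mem_univ, if_pos]
    by_cases hkk : k = k'
    · subst hkk
      simp [Matrix.one_apply_eq]
    · rw [if_neg (fun hcontra : τhat k = τhat k' => hkk (hτhatinj hcontra))]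
      rw [Matrix.one_apply_ne hkk]
  have hP1det : (P 1).det ≠ 0 := by
    intro h0
    have := congrArg Matrix.det hPtr
    rw [Matrix.det_mul, h0, zero_mul] at this
    simp at this
  have hPt_det : ∀ t : ℝ, (P t).det = t * (P 1).det := by
    intro t
    have hupd : P t = Matrix.updateRow (P 1) (Fin.last m) (t • (P 1 (Fin.last m))) := by
      ext k l
      by_cases hk : k = Fin.last m
      · subst hk
        rw [Matrix.updateRow_self]
        simp only [hPdef, Pi.smul_apply, smul_eq_mul]
        have : ¬ ((Fin.last m : Fin (m+1)) : ℕ) < m := by simp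
        simp [this, mul_ite]
      · rw [Matrix.updateRow_ne hk]
        have hklt : (k : ℕ) < m := by
          have h1 : (k : ℕ) < m + 1 := k.isLt
          have h2 : (k : ℕ) ≠ m := fun hh => hk (Fin.ext hh)
          omega
        simp [hPdef, hklt]
    rw [hupd, Matrix.det_updateRow_smul, Matrix.updateRow_eq_self]
  set t₀ : ℝ := ((P 1).det * Q.det)⁻¹ with ht₀
  have ht₀ne : t₀ ≠ 0 := by
    rw [ht₀]
    exact inv_ne_zero (mul_ne_zero hP1det hQdet)
  set Rmat : Matrix (Fin (m + 1) ⊕ Fin (n + 1)) (Fin (m + 1) ⊕ Fin (n + 1)) ℝ :=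
    fromBlocks (P t₀) 0 0 Q with hRmat
  have hRdet : Rmat.det = 1 := by
    rw [hRmat, Matrix.det_fromBlocks_zero₂₁, hPt_det, ht₀]
    field_simp
  set R : Matrix.SpecialLinearGroup (Fin (m + 1) ⊕ Fin (n + 1)) ℝ := ⟨Rmat, hRdet⟩ with hRdef
  set A' : (Fin m → ℝ) → (Fin m → ℝ) := fun a k => a (τ k) * ((c k : ℝ))⁻¹ with hA'
  set B' : (Fin (n + 1) → ℝ) → (Fin (n + 1) → ℝ) := fun b => t₀ • e b with hB'
  have hkey : ∀ a b, P t₀ * rhoBlock T a b = rhoBlock S (A' a) (B' b) * Q := by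
    intro a b
    ext k j
    rw [hPmul]
    rw [show (rhoBlock S (A' a) (B' b) * Q) k j = ((rhoBlock S (A' a) (B' b) k) ᵥ* Q) j from
      congrFun (Matrix.mul_apply_eq_vecMul _ _ k) j]
    by_cases hk : (k : ℕ) < m
    · set k' : Fin m := ⟨k, hk⟩ with hk'
      have hkc : k = Fin.castSucc k' := Fin.ext rfl
      rw [hkc, hτhat_cast, rhoBlock_castSucc, rhoBlock_row_castSucc]
      rw [Matrix.smul_vecMul]
      have hSk : S k' ᵥ* Q = (c k' : ℝ) • T (τ k') := by
        rw [← hcv k', Matrix.smul_vecMul, hQkey]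
      rw [hSk]
      simp only [hA', Pi.smul_apply, smul_eq_mul]
      have h1 : ((Fin.castSucc k' : Fin (m+1)) : ℕ) < m := by simpa using hk
      rw [if_pos h1]
      field_simp
    · have hkl : k = Fin.last m := by
        rw [Fin.ext_iff]
        have := k.isLt
        simp only [Fin.val_last]
        omega
      rw [hkl, hτhat_last, rhoBlock_last]
      have hrow : rhoBlock S (A' a) (B' b) (Fin.last m) = B' b := by
        funext j'
        rw [rhoBlock_last]
      rw [hrow, hB', Matrix.smul_vecMul, hQkey]
      rw [if_neg (by simp)]
      rfl
  have hconj : ∀ a b, R * rhoT T a b * R⁻¹ = rhoT S (A' a) (B' b) := by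
    intro a b
    rw [mul_inv_eq_iff_eq_mul]
    apply Subtype.ext
    rw [Matrix.SpecialLinearGroup.coe_mul, Matrix.SpecialLinearGroup.coe_mul]
    show Rmat * (rhoT T a b : Matrix _ _ ℝ) = (rhoT S (A' a) (B' b) : Matrix _ _ ℝ) * Rmat
    rw [rhoT_coe, rhoT_coe, hRmat, fromBlocks_multiply, fromBlocks_multiply]
    rw [hkey a b]
    simp
  refine ⟨R, ?_⟩
  ext g
  constructor
  · rintro ⟨_, ⟨a, b, rfl⟩, rfl⟩
    exact ⟨A' a, B' b, hconj a b⟩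
  · rintro ⟨a', b', rfl⟩
    set a : Fin m → ℝ := fun i2 => a' (τ.symm i2) * (c (τ.symm i2) : ℝ) with ha
    set b : Fin (n + 1) → ℝ := t₀⁻¹ • e.symm b' with hb
    refine ⟨rhoT T a b, ⟨a, b, rfl⟩, ?_⟩
    show R * rhoT T a b * R⁻¹ = rhoT S a' b'
    rw [hconj a b]
    have hAa : A' a = a' := by
      funext k
      simp only [hA', ha, Equiv.symm_apply_apply]
      rw [mul_assoc, mul_inv_cancel₀ (Units.ne_zero (c k)), mul_one]
    have hBb : B' b = b' := by
      show t₀ • e (t₀⁻¹ • e.symm b') = b'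
      rw [LinearEquiv.map_smul, LinearEquiv.apply_symm_apply, smul_smul,
        mul_inv_cancel₀ ht₀ne, one_smul]
    rw [hAa, hBb]

/-- with `ν = n + 1 ≥ 2` columns, `m ≥ ν + 2` rows, the map
`[T] ↦ [L_T]` from equivalence classes of generic `m × ν` matrices to conjugacy classes
of subgroups of `SL_{m+ν+1}(ℝ)` is well defined and injective: `L_T` and `L_S` are
conjugate iff the unordered generalized cross ratios of the projectivized rows of `T`
and of `S` agree. -/
theorem LT_conjugate_iff_UC {n m : ℕ} (hm : n + 3 ≤ m) (hn : 1 ≤ n)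
    (T S : Matrix (Fin m) (Fin (n + 1)) ℝ) (hT : Generic T) (hS : Generic S) :
    (∃ R : Matrix.SpecialLinearGroup (Fin (m + 1) ⊕ Fin (n + 1)) ℝ,
        (fun g => R * g * R⁻¹) '' LTgrp T = LTgrp S) ↔
      UC (projRows (by omega) T hT) = UC (projRows (by omega) S hS) := by
  constructor
  · rintro ⟨R, hR⟩
    exact UC_eq_of_rel (projRel_of_conj hm hn (by omega) T S hT hS R hR)
  · intro hUC
    obtain ⟨e₁, hz⟩ := UC_self_mem hm (by omega) T hT
    have hzS : (fun i => projMap e₁ (projRows (by omega) T hT i)) ∈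
        UC (projRows (by omega) S hS) := hUC ▸ hz
    obtain ⟨σ₂, e₂, hz₂, -⟩ := hzS
    have hrelTS : ProjRel (projRows (by omega : n + 1 ≤ m) T hT)
        (projRows (by omega) S hS) := by
      refine ⟨σ₂, e₂ ≪≫ₗ e₁.symm, fun i => ?_⟩
      rw [projMap_trans, ← hz₂ i, projMap_symm_apply]
    exact conj_of_projRel hm hn (by omega) T S hT hS hrelTS.symm
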